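/- Let α ∈ [0,1] and let ρ, ρ' ∈ [0,1]. Then the Sturmian words s_{α,ρ} and s_{α,ρ'} are at distance at most one: for all integers p ≤ q, the number of indices i with p ≤ i ≤ q and s_{α,ρ}(i) = 0 differs from the number of indices i with p ≤ i ≤ q and s_{α,ρ'}(i) = 0 by at most 1. -/

import Mathlib

/-- Bi-infinite binary words are functions `ℤ → Bool`, where `false` stands for the
letter 0 and `true` for the letter 1.  `zeroCount u p q` is the number of indices
`i` with `p ≤ i ≤ q` and `u i = 0`, as an integer. -/
noncomputable def zeroCount (u : ℤ → Bool) (p q : ℤ) : ℤ :=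
  ((Finset.Icc p q).filter (fun i => u i = false)).card

open Classical in
/-- The Sturmian word of slope `α` and intercept `ρ`: the letter at position `n` is
`0` (i.e. `false`) iff the fractional part of `ρ + n·α` lies in `[0, 1 - α)`. -/
noncomputable def sturmian (α ρ : ℝ) (n : ℤ) : Bool :=
  if Int.fract (ρ + n * α) < 1 - α then false else true

lemma floor_add_alpha (α x : ℝ) (h0 : 0 ≤ α) (h1 : α ≤ 1) :
    (⌊x + α⌋ : ℤ) - ⌊x⌋ = if Int.fract x < 1 - α then 0 else 1 := by
  have hx : x + α = (⌊x⌋ : ℝ) + (Int.fract x + α) := by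
    have := Int.fract_add_floor x
    unfold Int.fract
    ring
  rw [hx, Int.floor_intCast_add]
  have hf0 : 0 ≤ Int.fract x := Int.fract_nonneg x
  have hf1 : Int.fract x < 1 := Int.fract_lt_one x
  rcases lt_or_ge (Int.fract x) (1 - α) with h | h
  · rw [if_pos h]
    have : ⌊Int.fract x + α⌋ = 0 := by
      rw [Int.floor_eq_zero_iff, Set.mem_Ico]
      exact ⟨by linarith, by linarith⟩
    omega
  · rw [if_neg (not_lt.mpr h)]
    have : ⌊Int.fract x + α⌋ = 1 := by
      rw [Int.floor_eq_iff]
      push_cast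
      constructor <;> linarith
    omega

lemma sum_telescope_Icc (g : ℤ → ℤ) (p q : ℤ) (h : p ≤ q) :
    ∑ i ∈ Finset.Icc p q, (g (i + 1) - g i) = g (q + 1) - g p := by
  refine Int.le_induction
    (motive := fun q _ => ∑ i ∈ Finset.Icc p q, (g (i + 1) - g i) = g (q + 1) - g p)
    ?_ ?_ q h
  · simp
  · intro q hq ih
    have hins : Finset.Icc p (q + 1) = insert (q + 1) (Finset.Icc p q) := by
      ext i; simp; omega
    rw [hins, Finset.sum_insert (by simp), ih]; ring

lemma zeroCount_sturmian (α ρ : ℝ) (h0 : 0 ≤ α) (h1 : α ≤ 1) (p q : ℤ) (h : p ≤ q) :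
    zeroCount (sturmian α ρ) p q =
      ((q + 1) - ⌊ρ + (q + 1) * α⌋) - (p - ⌊ρ + p * α⌋) := by
  classical
  have key : ∀ i : ℤ, (if sturmian α ρ i = false then (1 : ℤ) else 0) =
      (((i : ℤ) + 1) - ⌊ρ + ((i : ℝ) + 1) * α⌋) - (i - ⌊ρ + i * α⌋) := by
    intro i
    have hfe : ρ + ((i : ℝ) + 1) * α = (ρ + i * α) + α := by ring
    have hf := floor_add_alpha α (ρ + i * α) h0 h1
    rcases lt_or_ge (Int.fract (ρ + i * α)) (1 - α) with h' | h'
    · rw [if_pos h'] at hf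
      simp only [sturmian, hfe, if_pos h']
      simp
      omega
    · rw [if_neg (not_lt.mpr h')] at hf
      simp only [sturmian, hfe, if_neg (not_lt.mpr h')]
      simp
      omega
  have : zeroCount (sturmian α ρ) p q =
      ∑ i ∈ Finset.Icc p q, (if sturmian α ρ i = false then (1 : ℤ) else 0) := by
    rw [zeroCount, Finset.card_filter]
    push_cast
    rfl
  rw [this]
  simp_rw [key]
  have ht := sum_telescope_Icc (fun i => i - ⌊ρ + i * α⌋) p q h
  push_cast at ht
  convert ht using 2

lemma aux_le (α ρ ρ' : ℝ)
    (hα : α ∈ Set.Icc (0 : ℝ) 1) (hle : ρ ≤ ρ') (hd : ρ' - ρ ≤ 1) :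
    ∀ p q : ℤ, p ≤ q →
      |zeroCount (sturmian α ρ) p q - zeroCount (sturmian α ρ') p q| ≤ 1 := by
  intro p q hpq
  obtain ⟨h0, h1⟩ := hα
  rw [zeroCount_sturmian α ρ h0 h1 p q hpq, zeroCount_sturmian α ρ' h0 h1 p q hpq]
  have bound : ∀ x : ℝ, ⌊ρ + x⌋ ≤ ⌊ρ' + x⌋ ∧ ⌊ρ' + x⌋ ≤ ⌊ρ + x⌋ + 1 := by
    intro x
    constructor
    · exact Int.floor_le_floor (by linarith)
    · have : ⌊ρ' + x⌋ ≤ ⌊(ρ + x) + 1⌋ := Int.floor_le_floor (by linarith)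
      simpa [Int.floor_add_one] using this
  obtain ⟨a1, a2⟩ := bound ((q + 1) * α)
  obtain ⟨b1, b2⟩ := bound (p * α)
  rw [abs_le]
  omega

/-- Two Sturmian words with the same slope are at distance at most one. -/
theorem sturmian_same_slope_balance_le_one (α ρ ρ' : ℝ)
    (hα : α ∈ Set.Icc (0 : ℝ) 1) (hρ : ρ ∈ Set.Icc (0 : ℝ) 1)
    (hρ' : ρ' ∈ Set.Icc (0 : ℝ) 1) :
    ∀ p q : ℤ, p ≤ q →
      |zeroCount (sturmian α ρ) p q - zeroCount (sturmian α ρ') p q| ≤ 1 := by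
  rcases le_total ρ ρ' with h | h
  · exact aux_le α ρ ρ' hα h (by obtain ⟨a,b⟩ := hρ; obtain ⟨c,d⟩ := hρ'; linarith) 
  · intro p q hpq
    rw [abs_sub_comm]
    exact aux_le α ρ' ρ hα h (by obtain ⟨a,b⟩ := hρ; obtain ⟨c,d⟩ := hρ'; linarith) p q hpq
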